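/- For any abelian group A there is an exact sequence 0 → ₂A → A → P(A) → Γ(A) → 0, where ₂A = {a ∈ A : 2a = 0}, the map A → P(A) is a ↦ p(a) - p(-a), and P(A) → Γ(A) is the natural epimorphism ν with ν(p(a)) = γ(a). -/

import Mathlib

def crossEff {A B : Type*} [AddCommGroup A] [AddCommGroup B] (f : A → B) (a b : A) : B :=
  f (a + b) - f a - f b

def IsQuadraticMap {A B : Type*} [AddCommGroup A] [AddCommGroup B] (f : A → B) : Prop :=
  (∀ a₁ a₂ b : A, crossEff f (a₁ + a₂) b = crossEff f a₁ b + crossEff f a₂ b) ∧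
  (∀ a b₁ b₂ : A, crossEff f a (b₁ + b₂) = crossEff f a b₁ + crossEff f a b₂)

/-- `p : A → P` is a universal quadratic map. -/
def IsUniversalQuadratic {A P : Type*} [AddCommGroup A] [AddCommGroup P]
    (p : A → P) : Prop :=
  IsQuadraticMap p ∧
    ∀ (B : Type*) [AddCommGroup B] (f : A → B), IsQuadraticMap f →
      ∃! h : P →+ B, ∀ a : A, f a = h (p a)

/-- `γ : A → G` is a universal homogeneous quadratic map. -/
def IsUniversalHomogQuadratic {A G : Type*} [AddCommGroup A] [AddCommGroup G]
    (γ : A → G) : Prop :=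
  (IsQuadraticMap γ ∧ ∀ a : A, γ (-a) = γ a) ∧
    ∀ (B : Type*) [AddCommGroup B] (f : A → B),
      (IsQuadraticMap f ∧ ∀ a : A, f (-a) = f a) →
      ∃! h : G →+ B, ∀ a : A, f a = h (γ a)

lemma crossEff_comp {A B C : Type*} [AddCommGroup A] [AddCommGroup B] [AddCommGroup C]
    (f : A → B) (h : B →+ C) (a b : A) :
    crossEff (fun x => h (f x)) a b = h (crossEff f a b) := by
  simp [crossEff, map_sub]

lemma IsQuadraticMap.comp {A B C : Type*} [AddCommGroup A] [AddCommGroup B] [AddCommGroup C]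
    {f : A → B} (hf : IsQuadraticMap f) (h : B →+ C) :
    IsQuadraticMap (fun x => h (f x)) := by
  constructor
  · intro a₁ a₂ b
    rw [crossEff_comp, crossEff_comp, crossEff_comp, hf.1, map_add]
  · intro a b₁ b₂
    rw [crossEff_comp, crossEff_comp, crossEff_comp, hf.2, map_add]

lemma AddMonoidHom.isQuadraticMap {A B : Type*} [AddCommGroup A] [AddCommGroup B]
    (χ : A →+ B) : IsQuadraticMap (fun x => χ x) := by
  have hz : ∀ a b : A, crossEff (fun x => χ x) a b = 0 := by
    intro a b
    simp [crossEff, map_add]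
  constructor <;> intros <;> simp [hz]

/-- The `ULift` version of an additive group hom into a `Type 0` group, as an `AddMonoidHom`. -/
def upHom (X : Type*) [AddCommGroup X] : X →+ ULift X :=
  AddEquiv.ulift.symm.toAddMonoidHom

@[simp] lemma upHom_apply {X : Type*} [AddCommGroup X] (x : X) :
    (upHom X x).down = x := rfl

/-- for any abelian group `A` there is an exact sequence
`0 → ₂A → A → P(A) → Γ(A) → 0`, where `₂A = {a | 2a = 0}`, the map `A → P(A)` is
`a ↦ p(a) - p(-a)` and `ν : P(A) → Γ(A)` is the natural epimorphism with `ν(p(a)) = γ(a)`. -/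
theorem two_torsion_P_Gamma_exact {A P G : Type*}
    [AddCommGroup A] [AddCommGroup P] [AddCommGroup G]
    (p : A → P) (hp : IsUniversalQuadratic p)
    (γ : A → G) (hγ : IsUniversalHomogQuadratic γ)
    (ν : P →+ G) (hν : ∀ a : A, ν (p a) = γ a) :
    (∀ a : A, p a - p (-a) = 0 ↔ a + a = 0) ∧
    (∀ x : P, (∃ a : A, p a - p (-a) = x) ↔ ν x = 0) ∧
    Function.Surjective ν := by
  obtain ⟨⟨hp1, hp2⟩, hu⟩ := hp
  set D := AddCircle (1 : ℚ) with hD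
  -- p 0 = 0
  have hc0 : crossEff p 0 0 = 0 := by
    have h := hp1 0 0 0
    rw [add_zero] at h
    nth_rewrite 1 [← add_zero (crossEff p 0 0)] at h
    exact (add_left_cancel h).symm
  have hp0 : p 0 = 0 := by
    have := hc0
    simp only [crossEff, add_zero, sub_self, zero_sub, neg_eq_zero] at this
    exact this
  have hc0l : ∀ b : A, crossEff p 0 b = 0 := by
    intro b
    simp [crossEff, hp0]
  have hc0r : ∀ a : A, crossEff p a 0 = 0 := by
    intro a
    simp [crossEff, hp0]
  have skew1 : ∀ a b : A, crossEff p (-a) b = - crossEff p a b := by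
    intro a b
    have h := hp1 a (-a) b
    rw [add_neg_cancel, hc0l] at h
    exact (neg_eq_of_add_eq_zero_right h.symm).symm
  have skew2 : ∀ a b : A, crossEff p a (-b) = - crossEff p a b := by
    intro a b
    have h := hp2 a b (-b)
    rw [add_neg_cancel, hc0r] at h
    exact (neg_eq_of_add_eq_zero_right h.symm).symm
  have hcneg : ∀ a b : A, crossEff p (-a) (-b) = crossEff p a b := by
    intro a b
    rw [skew1, skew2, neg_neg]
  -- d is additive
  have hd : ∀ a b : A, p (a + b) - p (-(a + b)) =
      (p a - p (-a)) + (p b - p (-b)) := by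
    intro a b
    have e1 : p (a + b) = crossEff p a b + p a + p b := by
      simp [crossEff]; abel
    have e2 : p (-(a + b)) = crossEff p a b + p (-a) + p (-b) := by
      rw [neg_add, ← hcneg a b]
      simp [crossEff]; abel
    rw [e1, e2]; abel
  have hdzero : p (0:A) - p (-0) = 0 := by rw [neg_zero, sub_self]
  have hdneg : ∀ a : A, p (-a) - p (-(-a)) = -(p a - p (-a)) := by
    intro a
    rw [neg_neg]; abel
  -- Part 1
  have part1 : ∀ a : A, p a - p (-a) = 0 ↔ a + a = 0 := by
    intro a
    constructor
    · intro h
      by_contra hne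
      obtain ⟨χ, hχ⟩ := CharacterModule.exists_character_apply_ne_zero_of_ne_zero hne
      set χ' : A →+ D := (χ : A →+ D) with hχ'
      have hfq : IsQuadraticMap (fun x : A => upHom D (χ' x)) :=
        IsQuadraticMap.comp χ'.isQuadraticMap (upHom D)
      obtain ⟨h0, hh0, -⟩ := hu _ (fun x => upHom D (χ' x)) hfq
      have h2 : upHom D (χ' a) - upHom D (χ' (-a)) = 0 := by
        rw [hh0 a, hh0 (-a), ← map_sub, h, map_zero]
      have h3 : χ' a - χ' (-a) = 0 := congrArg ULift.down h2
      rw [map_neg, sub_neg_eq_add, ← map_add] at h3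
      exact hχ h3
    · intro h
      have : -a = a := neg_eq_of_add_eq_zero_right h
      rw [this, sub_self]
  refine ⟨part1, ?_, ?_⟩
  -- Part 2
  · set S : AddSubgroup P :=
      { carrier := Set.range (fun a : A => p a - p (-a))
        zero_mem' := ⟨0, hdzero⟩
        add_mem' := by
          rintro x y ⟨a, rfl⟩ ⟨b, rfl⟩
          exact ⟨a + b, hd a b⟩
        neg_mem' := by
          rintro x ⟨a, rfl⟩
          exact ⟨-a, hdneg a⟩ } with hS
    have hmem : ∀ a : A, p a - p (-a) ∈ S := fun a => ⟨a, rfl⟩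
    intro x
    constructor
    · rintro ⟨a, rfl⟩
      rw [map_sub, hν, hν, hγ.1.2, sub_self]
    · intro hx
      by_contra hxS
      have hxS' : x ∉ S := hxS
      set q0 : P →+ P ⧸ S := QuotientAddGroup.mk' S with hq0
      have hq0x : q0 x ≠ 0 := fun h => hxS' ((QuotientAddGroup.eq_zero_iff x).mp h)
      obtain ⟨χ, hχ⟩ := CharacterModule.exists_character_apply_ne_zero_of_ne_zero hq0x
      set χ' : P →+ D := ((χ : (P ⧸ S) →+ D).comp q0) with hχ'
      -- the quadratic even map a ↦ χ' (p a)
      have h0 : ∀ a : A, χ' (p (-a)) = χ' (p a) := by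
        intro a
        have hz : q0 (p a - p (-a)) = 0 := (QuotientAddGroup.eq_zero_iff _).mpr (hmem a)
        have h1 : χ' (p a - p (-a)) = 0 := by
          rw [hχ']; show χ (q0 _) = 0; rw [hz, map_zero]
        rw [map_sub, sub_eq_zero] at h1
        exact h1.symm
      obtain ⟨h, hh, -⟩ := hγ.2 _ (fun a => upHom D (χ' (p a)))
        ⟨IsQuadraticMap.comp (IsQuadraticMap.comp ⟨hp1, hp2⟩ χ') (upHom D),
         fun a => by show upHom D (χ' (p (-a))) = upHom D (χ' (p a)); rw [h0 a]⟩
      obtain ⟨k, -, kuniq⟩ := hu _ (fun a => upHom D (χ' (p a)))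
        (IsQuadraticMap.comp (IsQuadraticMap.comp ⟨hp1, hp2⟩ χ') (upHom D))
      have e1 : (upHom D).comp χ' = k := kuniq _ (fun a => rfl)
      set m2 := (upHom D).comp
        ((AddEquiv.ulift.toAddMonoidHom.comp h).comp ν) with hm2
      have e2 : m2 = k := kuniq _ (by
        intro a
        rw [hm2]
        simp only [AddMonoidHom.comp_apply, hν]
        rw [← hh a]
        rfl)
      have e3 : upHom D (χ' x) = m2 x :=
        congrArg (fun (m : P →+ _) => m x) (e1.trans e2.symm)
      rw [hm2] at e3
      simp only [AddMonoidHom.comp_apply, hx, map_zero] at e3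
      have : χ' x = 0 := congrArg ULift.down e3
      exact hχ this
  -- Part 3: surjectivity
  · intro g
    by_contra hg
    have hgH : g ∉ ν.range := fun ⟨x, hx⟩ => hg ⟨x, hx⟩
    set q0 : G →+ G ⧸ ν.range := QuotientAddGroup.mk' ν.range with hq0
    have hq0g : q0 g ≠ 0 := fun h => hgH ((QuotientAddGroup.eq_zero_iff g).mp h)
    obtain ⟨χ, hχ⟩ := CharacterModule.exists_character_apply_ne_zero_of_ne_zero hq0g
    set χ' : G →+ D := ((χ : (G ⧸ ν.range) →+ D).comp q0) with hχ'
    have hγker : ∀ a : A, χ' (γ a) = 0 := by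
      intro a
      have hz : q0 (γ a) = 0 := (QuotientAddGroup.eq_zero_iff _).mpr ⟨p a, hν a⟩
      rw [hχ']; show χ (q0 _) = 0; rw [hz, map_zero]
    obtain ⟨k, -, kuniq⟩ := hγ.2 _ (fun a => upHom D (χ' (γ a)))
      ⟨IsQuadraticMap.comp (IsQuadraticMap.comp hγ.1.1 χ') (upHom D),
       fun a => by show upHom D (χ' (γ (-a))) = upHom D (χ' (γ a)); rw [hγ.1.2 a]⟩
    have e1 : (upHom D).comp χ' = k := kuniq _ (fun a => rfl)
    have e2 : (0 : G →+ _) = k := kuniq _ (by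
      intro a
      rw [hγker a, map_zero, AddMonoidHom.zero_apply])
    have e3 : upHom D (χ' g) = 0 :=
      congrArg (fun (m : G →+ ULift D) => m g) (e1.trans e2.symm)
    have : χ' g = 0 := congrArg ULift.down e3
    exact hχ this
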